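/- arXiv:1705.06162 — 2 statements merged into one kernel-verified Lean document; each statement's English description precedes it below -/
import Mathlib

section
/- Let p, q, a, ν be real numbers with p ≠ 0, and suppose that 4 q a² + 1 = 0 and A = −12 ν q a / p. Then the function U(ξ) = A · sech²(ξ) satisfies −ν U(ξ) + (p a / 2) U(ξ)² − ν q a² U″(ξ) = 0 for all ξ ∈ ℝ. -/
private lemma sech_sq_hasDeriv (A ξ : ℝ) :
    HasDerivAt (fun ξ : ℝ => A * (1 / Real.cosh ξ) ^ 2)
      (-2 * A * Real.sinh ξ / Real.cosh ξ ^ 3) ξ := by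
  have hc : Real.cosh ξ ≠ 0 := (Real.cosh_pos ξ).ne'
  have h1 : HasDerivAt (fun x : ℝ => Real.cosh x ^ 2)
      (2 * Real.cosh ξ ^ 1 * Real.sinh ξ) ξ := (Real.hasDerivAt_cosh ξ).pow 2
  have h2 := (h1.inv (pow_ne_zero 2 hc)).const_mul A
  have heq : (fun ξ : ℝ => A * (1 / Real.cosh ξ) ^ 2)
      = fun y : ℝ => A * (Real.cosh y ^ 2)⁻¹ := by
    funext x; rw [one_div, inv_pow]
  rw [heq]
  refine h2.congr_deriv ?_
  field_simp

private lemma sech_sq_deriv1 (A : ℝ) :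
    deriv (fun ξ : ℝ => A * (1 / Real.cosh ξ) ^ 2)
      = fun ξ => -2 * A * Real.sinh ξ / Real.cosh ξ ^ 3 := by
  funext ξ; exact (sech_sq_hasDeriv A ξ).deriv

private lemma sech_sq_deriv2 (A ξ : ℝ) :
    deriv (deriv (fun ξ : ℝ => A * (1 / Real.cosh ξ) ^ 2)) ξ
      = 4 * A * (1 / Real.cosh ξ) ^ 2 - 6 * A * (1 / Real.cosh ξ) ^ 4 := by
  rw [sech_sq_deriv1]
  have hc : Real.cosh ξ ≠ 0 := (Real.cosh_pos ξ).ne'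
  have hnum : HasDerivAt (fun x : ℝ => -2 * A * Real.sinh x)
      (-2 * A * Real.cosh ξ) ξ := (Real.hasDerivAt_sinh ξ).const_mul (-2 * A)
  have hden : HasDerivAt (fun x : ℝ => Real.cosh x ^ 3)
      (3 * Real.cosh ξ ^ 2 * Real.sinh ξ) ξ := by
    have := (Real.hasDerivAt_cosh ξ).pow 3
    exact this.congr_deriv (by norm_num)
  have h := (hnum.div hden (pow_ne_zero 3 hc)).deriv
  rw [show (fun ξ : ℝ => -2 * A * Real.sinh ξ / Real.cosh ξ ^ 3)
      = ((fun x : ℝ => -2 * A * Real.sinh x) / fun x : ℝ => Real.cosh x ^ 3) from rfl, h]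
  have hid : Real.sinh ξ ^ 2 = Real.cosh ξ ^ 2 - 1 := by
    have := Real.cosh_sq_sub_sinh_sq ξ; nlinarith
  field_simp
  linear_combination (6 * A) * hid

/-- If `4 q a² + 1 = 0` and `A = -12 ν q a / p` (with `p ≠ 0`), then
`U(ξ) = A sech²(ξ)` solves the once-integrated EW traveling wave equation
`-ν U + (p a / 2) U² - ν q a² U'' = 0` for all `ξ`. -/
theorem ew_sech_solution
    (p q a ν A : ℝ) (hp : p ≠ 0)
    (h1 : 4 * q * a ^ 2 + 1 = 0)
    (hA : A = -12 * ν * q * a / p) :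
    ∀ ξ : ℝ,
      -ν * (A * (1 / Real.cosh ξ) ^ 2)
      + p * a / 2 * (A * (1 / Real.cosh ξ) ^ 2) ^ 2
      - ν * q * a ^ 2 * deriv (deriv (fun ξ : ℝ => A * (1 / Real.cosh ξ) ^ 2)) ξ = 0 := by
  intro ξ
  rw [sech_sq_deriv2]
  have hA' : p * A = -12 * ν * q * a := by
    rw [hA]; field_simp
  set s := (1 / Real.cosh ξ) with hs
  have key : -ν * (A * s ^ 2) + p * a / 2 * (A * s ^ 2) ^ 2
      - ν * q * a ^ 2 * (4 * A * s ^ 2 - 6 * A * s ^ 4)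
      = (-ν * A - 4 * ν * (q * a ^ 2) * A) * s ^ 2
        + (a / 2 * (p * A) * A + 6 * ν * (q * a ^ 2) * A) * s ^ 4 := by ring
  rw [key, hA']
  linear_combination (-ν * A * s ^ 2) * h1
end

section
/- Let p, q, r, a, ν be real numbers with q ≠ 0, and suppose that p a² + ν² + 4 r ν² a² = 0 and A = −12 ν² a / q. Then the function U(ξ) = A · sech²(ξ) satisfies (p a² + ν²) U′(ξ) − r q a U(ξ) U′(ξ) + r ν² a² U‴(ξ) = 0 for all ξ ∈ ℝ. -/
open Real

private lemma sech_hasDeriv (ξ : ℝ) :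
    HasDerivAt (fun x : ℝ => (Real.cosh x)⁻¹) (-Real.sinh ξ / Real.cosh ξ ^ 2) ξ :=
  (Real.hasDerivAt_cosh ξ).inv (Real.cosh_pos _).ne'

private lemma hd1 (A : ℝ) (ξ : ℝ) :
    HasDerivAt (fun x : ℝ => A * (1 / Real.cosh x) ^ 2)
      (-2 * A * Real.sinh ξ * ((Real.cosh ξ)⁻¹) ^ 3) ξ := by
  have h := ((sech_hasDeriv ξ).pow 2).const_mul A
  simp only [one_div]
  have h : HasDerivAt (fun x : ℝ => A * ((Real.cosh x)⁻¹) ^ 2) _ ξ := h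
  convert h using 1
  have hc : Real.cosh ξ ≠ 0 := (Real.cosh_pos _).ne'
  norm_num
  field_simp

private lemma hd2 (A : ℝ) (ξ : ℝ) :
    HasDerivAt (fun x : ℝ => -2 * A * Real.sinh x * ((Real.cosh x)⁻¹) ^ 3)
      (-2 * A * Real.cosh ξ * ((Real.cosh ξ)⁻¹) ^ 3
        + 6 * A * Real.sinh ξ ^ 2 * ((Real.cosh ξ)⁻¹) ^ 4) ξ := by
  have h := ((Real.hasDerivAt_sinh ξ).mul ((sech_hasDeriv ξ).pow 3)).const_mul (-2 * A)
  have heq : (fun x : ℝ => -2 * A * (Real.sinh x * ((Real.cosh x)⁻¹) ^ 3))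
      = (fun x : ℝ => -2 * A * Real.sinh x * ((Real.cosh x)⁻¹) ^ 3) := by
    funext x; ring
  have h : HasDerivAt (fun x : ℝ => -2 * A * (Real.sinh x * ((Real.cosh x)⁻¹) ^ 3)) _ ξ := h
  rw [heq] at h
  convert h using 1
  have hc : Real.cosh ξ ≠ 0 := (Real.cosh_pos _).ne'
  simp only [Pi.pow_apply]
  norm_num
  field_simp
  ring

private lemma hd3 (A : ℝ) (ξ : ℝ) :
    HasDerivAt (fun x : ℝ => -2 * A * Real.cosh x * ((Real.cosh x)⁻¹) ^ 3
        + 6 * A * Real.sinh x ^ 2 * ((Real.cosh x)⁻¹) ^ 4)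
      (16 * A * Real.sinh ξ * ((Real.cosh ξ)⁻¹) ^ 3
        - 24 * A * Real.sinh ξ ^ 3 * ((Real.cosh ξ)⁻¹) ^ 5) ξ := by
  have h1 := ((Real.hasDerivAt_cosh ξ).mul ((sech_hasDeriv ξ).pow 3)).const_mul (-2 * A)
  have h2 := (((Real.hasDerivAt_sinh ξ).pow 2).mul ((sech_hasDeriv ξ).pow 4)).const_mul (6 * A)
  have h := h1.add h2
  have heq : (fun x : ℝ => -2 * A * (Real.cosh x * ((Real.cosh x)⁻¹) ^ 3)
      + 6 * A * ((Real.sinh x) ^ 2 * ((Real.cosh x)⁻¹) ^ 4))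
      = (fun x : ℝ => -2 * A * Real.cosh x * ((Real.cosh x)⁻¹) ^ 3
        + 6 * A * Real.sinh x ^ 2 * ((Real.cosh x)⁻¹) ^ 4) := by
    funext x; ring
  have h : HasDerivAt (fun x : ℝ => -2 * A * (Real.cosh x * ((Real.cosh x)⁻¹) ^ 3)
      + 6 * A * ((Real.sinh x) ^ 2 * ((Real.cosh x)⁻¹) ^ 4)) _ ξ := h
  rw [heq] at h
  convert h using 1
  have hc : Real.cosh ξ ≠ 0 := (Real.cosh_pos _).ne'
  have hs : Real.cosh ξ ^ 2 = Real.sinh ξ ^ 2 + 1 := Real.cosh_sq ξ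
  simp only [Pi.pow_apply]
  norm_num
  field_simp
  nlinarith [hs, Real.cosh_pos ξ]

/-- If `p a² + ν² + 4 r ν² a² = 0` and `A = -12 ν² a / q` (with `q ≠ 0`), then
`U(ξ) = A sech²(ξ)` solves the once-integrated sRLW traveling wave equation
`(p a² + ν²) U' - r q a U U' + r ν² a² U''' = 0` for all `ξ`. -/
theorem srlw_sech_solution
    (p q r a ν A : ℝ) (hq : q ≠ 0)
    (h1 : p * a ^ 2 + ν ^ 2 + 4 * r * ν ^ 2 * a ^ 2 = 0)
    (hA : A = -12 * ν ^ 2 * a / q) :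
    ∀ ξ : ℝ,
      (p * a ^ 2 + ν ^ 2) * deriv (fun ξ : ℝ => A * (1 / Real.cosh ξ) ^ 2) ξ
      - r * q * a * (A * (1 / Real.cosh ξ) ^ 2)
          * deriv (fun ξ : ℝ => A * (1 / Real.cosh ξ) ^ 2) ξ
      + r * ν ^ 2 * a ^ 2
          * deriv (deriv (deriv (fun ξ : ℝ => A * (1 / Real.cosh ξ) ^ 2))) ξ = 0 := by
  intro ξ
  have e1 : deriv (fun ξ : ℝ => A * (1 / Real.cosh ξ) ^ 2)
      = fun x : ℝ => -2 * A * Real.sinh x * ((Real.cosh x)⁻¹) ^ 3 := by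
    funext x; exact (hd1 A x).deriv
  have e2 : deriv (deriv (fun ξ : ℝ => A * (1 / Real.cosh ξ) ^ 2))
      = fun x : ℝ => -2 * A * Real.cosh x * ((Real.cosh x)⁻¹) ^ 3
        + 6 * A * Real.sinh x ^ 2 * ((Real.cosh x)⁻¹) ^ 4 := by
    rw [e1]; funext x; exact (hd2 A x).deriv
  have e3 : deriv (deriv (deriv (fun ξ : ℝ => A * (1 / Real.cosh ξ) ^ 2)))
      = fun x : ℝ => 16 * A * Real.sinh x * ((Real.cosh x)⁻¹) ^ 3
        - 24 * A * Real.sinh x ^ 3 * ((Real.cosh x)⁻¹) ^ 5 := by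
    rw [e2]; funext x; exact (hd3 A x).deriv
  rw [e3, e1]
  have hc : Real.cosh ξ ≠ 0 := (Real.cosh_pos _).ne'
  have hs : Real.cosh ξ ^ 2 = Real.sinh ξ ^ 2 + 1 := Real.cosh_sq ξ
  have hAq : A * q = -12 * ν ^ 2 * a := by
    rw [hA]; field_simp
  have hp : p * a ^ 2 + ν ^ 2 = -(4 * r * ν ^ 2 * a ^ 2) := by linarith
  have hci : Real.cosh ξ * (Real.cosh ξ)⁻¹ = 1 := mul_inv_cancel₀ hc
  simp only [one_div]
  set s := Real.sinh ξ
  set c := Real.cosh ξ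
  linear_combination (-2 * A * s * c⁻¹ ^ 3) * hp
    + (2 * r * A * a * s * c⁻¹ ^ 5) * hAq
    + (24 * r * ν ^ 2 * a ^ 2 * A * s * c⁻¹ ^ 5) * hs
    + (-24 * r * ν ^ 2 * a ^ 2 * A * s * c⁻¹ ^ 3 * (c * c⁻¹ + 1)) * hci
end
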